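/- For all real v with 0 < v < 1, setting F(v) = ln(2/√(1-v²)) - (v²(1-v²)/4) ₄F₃[1,1,3/2,3/2; 2,2,2; 4v²(1-v²)], one has F'(v) = (π - (2-4v²) K(2v√(1-v²))) / (2πv(1-v²)), where K is the complete elliptic integral of the first kind. -/

import Mathlib

open Real

/-- Rising factorial (Pochhammer symbol) `(a)_n` on the reals. -/
noncomputable def poch (a : ℝ) (n : ℕ) : ℝ := (ascPochhammer ℝ n).eval a

/-- Generalized hypergeometric series ₄F₃. -/
noncomputable def F43 (a1 a2 a3 a4 b1 b2 b3 x : ℝ) : ℝ :=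
  ∑' n : ℕ, (poch a1 n * poch a2 n * poch a3 n * poch a4 n) /
    (poch b1 n * poch b2 n * poch b3 n * (n.factorial : ℝ)) * x ^ n

/-- Generalized hypergeometric series ₃F₂. -/
noncomputable def F32 (a1 a2 a3 b1 b2 x : ℝ) : ℝ :=
  ∑' n : ℕ, (poch a1 n * poch a2 n * poch a3 n) /
    (poch b1 n * poch b2 n * (n.factorial : ℝ)) * x ^ n

/-- Gaussian hypergeometric series ₂F₁. -/
noncomputable def F21 (a1 a2 b1 x : ℝ) : ℝ :=
  ∑' n : ℕ, (poch a1 n * poch a2 n) /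
    (poch b1 n * (n.factorial : ℝ)) * x ^ n

/-- Complete elliptic integral of the first kind. -/
noncomputable def ellipticK (k : ℝ) : ℝ :=
  ∫ θ in (0:ℝ)..(π/2), 1 / Real.sqrt (1 - (k * Real.sin θ) ^ 2)

/-- Complete elliptic integral of the second kind. -/
noncomputable def ellipticE (k : ℝ) : ℝ :=
  ∫ θ in (0:ℝ)..(π/2), Real.sqrt (1 - (k * Real.sin θ) ^ 2)

lemma poch_zero (a : ℝ) : poch a 0 = 1 := by simp [poch]

lemma poch_succ (a : ℝ) (n : ℕ) : poch a (n+1) = poch a n * (a + n) := by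
  simp [poch, ascPochhammer_succ_right]

lemma poch_succ_left (a : ℝ) (n : ℕ) : poch a (n+1) = a * poch (a+1) n := by
  simp [poch, ascPochhammer_succ_left, Polynomial.eval_comp]

lemma poch_one (n : ℕ) : poch 1 n = n.factorial := by
  induction n with
  | zero => simp [poch_zero]
  | succ n ih => rw [poch_succ, ih]; push_cast [Nat.factorial_succ]; ring

lemma poch_two (n : ℕ) : poch 2 n = (n+1).factorial := by
  induction n with
  | zero => simp [poch_zero]
  | succ n ih => rw [poch_succ, ih]; push_cast [Nat.factorial_succ]; ring

lemma poch_three_half (n : ℕ) : poch (3/2) n = 2 * poch (1/2) (n+1) := by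
  have := poch_succ_left (1/2) n
  norm_num at this
  rw [this]; ring

/-- `cc m = (1/2)_m / m!`. -/
noncomputable def cc (m : ℕ) : ℝ := poch (1/2) m / m.factorial

lemma cc_zero : cc 0 = 1 := by simp [cc, poch_zero]

lemma cc_succ (m : ℕ) : cc (m+1) = cc m * ((2*m+1)/(2*m+2)) := by
  have h1 : ((m+1).factorial : ℝ) = (m+1) * m.factorial := by
    push_cast [Nat.factorial_succ]; ring
  have h2 : (m.factorial : ℝ) ≠ 0 := Nat.cast_ne_zero.2 m.factorial_ne_zero
  have h3 : ((m:ℝ)+1) ≠ 0 := by positivity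
  rw [cc, cc, poch_succ, h1]
  field_simp
  ring

lemma cc_pos (m : ℕ) : 0 < cc m := by
  induction m with
  | zero => rw [cc_zero]; norm_num
  | succ m ih => rw [cc_succ]; positivity

lemma cc_le_one (m : ℕ) : cc m ≤ 1 := by
  induction m with
  | zero => rw [cc_zero]
  | succ m ih =>
    rw [cc_succ]
    have h : (2*(m:ℝ)+1)/(2*m+2) ≤ 1 := by
      rw [div_le_one (by positivity)]; linarith
    nlinarith [cc_pos m]

lemma cc_sq_le (m : ℕ) : cc m ^ 2 ≤ 1 / (2*m+1) := by
  induction m with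
  | zero => rw [cc_zero]; norm_num
  | succ m ih =>
    rw [cc_succ]
    have h2 : (0:ℝ) < 2*m+2 := by positivity
    have h1 : (0:ℝ) < 2*m+1 := by positivity
    have h3 : (0:ℝ) < 2*m+3 := by positivity
    have key : ((2*(m:ℝ)+1)/(2*m+2))^2 * (1/(2*m+1)) ≤ 1/(2*((m:ℝ)+1)+1) := by
      rw [div_pow, div_mul_div_comm, div_le_div_iff₀ (by positivity) (by positivity)]
      push_cast
      nlinarith
    calc (cc m * ((2*m+1)/(2*m+2)))^2 = cc m ^2 * ((2*(m:ℝ)+1)/(2*m+2))^2 := by ring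
    _ ≤ (1/(2*m+1)) * ((2*(m:ℝ)+1)/(2*m+2))^2 := by
        apply mul_le_mul_of_nonneg_right ih (by positivity)
    _ ≤ 1/(2*((m:ℝ)+1)+1) := by rw [mul_comm]; exact key
    _ = 1/(2*((m+1:ℕ):ℝ)+1) := by push_cast; ring

lemma sqrt_mul_pow_le {w : ℝ} (h0 : 0 ≤ w) (h1 : w ≤ 1) (n : ℕ) :
    Real.sqrt w * (1-w)^n ≤ 1 / Real.sqrt (n+1) := by
  have hb : 1 + (n:ℝ) * w ≤ (1+w)^n := one_add_mul_le_pow (by linarith) n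
  have hbp : (0:ℝ) < 1 + (n:ℝ)*w := by positivity
  have h2 : (1-w)^n * (1+w)^n ≤ 1 := by
    rw [← mul_pow]
    have : (1-w)*(1+w) = 1 - w^2 := by ring
    rw [this]
    apply pow_le_one₀ (by nlinarith) (by nlinarith)
  have h1n : (0:ℝ) ≤ (1-w)^n := pow_nonneg (by linarith) n
  have h3 : (1-w)^n ≤ 1/(1+(n:ℝ)*w) := by
    rw [le_div_iff₀ hbp]
    calc (1-w)^n * (1+(n:ℝ)*w) ≤ (1-w)^n * (1+w)^n :=
      mul_le_mul_of_nonneg_left hb h1n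
    _ ≤ 1 := h2
  have h6 : w / (1+(n:ℝ)*w) ≤ 1/((n:ℝ)+1) := by
    rw [div_le_div_iff₀ hbp (by positivity)]
    nlinarith
  have h5 : w * (1-w)^n ≤ 1/((n:ℝ)+1) := by
    refine le_trans ?_ h6
    rw [div_eq_mul_one_div]
    exact mul_le_mul_of_nonneg_left h3 h0
  have key : w * (1-w)^(2*n) ≤ 1/((n:ℝ)+1) := by
    have e : (1-w)^(2*n) = ((1-w)^n)^2 := by rw [mul_comm, pow_mul]
    have h4 : ((1-w)^n)^2 ≤ (1-w)^n := by
      nlinarith [pow_le_one₀ (by linarith : (0:ℝ) ≤ 1-w) (by linarith : 1-w ≤ (1:ℝ)) (n := n)]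
    nlinarith
  have lhs_eq : Real.sqrt w * (1-w)^n = Real.sqrt (w * (1-w)^(2*n)) := by
    rw [Real.sqrt_mul h0, mul_comm (2:ℕ) n, pow_mul, Real.sqrt_sq h1n]
  rw [lhs_eq, one_div, ← Real.sqrt_inv]
  exact Real.sqrt_le_sqrt (by rw [← one_div]; exact key)

lemma summable_bound : Summable (fun n : ℕ => 1/(((n:ℝ)+1) * Real.sqrt ((n:ℝ)+1))) := by
  have h : ∀ n : ℕ, 1/(((n:ℝ)+1) * Real.sqrt ((n:ℝ)+1)) = ((n+1:ℕ):ℝ) ^ (-(3/2 : ℝ)) := by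
    intro n
    have hp : (0:ℝ) < (n:ℝ)+1 := by positivity
    have h1 : ((n+1:ℕ):ℝ) ^ (-(3/2 : ℝ)) = (((n:ℝ)+1) ^ ((3/2):ℝ))⁻¹ := by
      push_cast
      rw [Real.rpow_neg hp.le]
    rw [h1, show (3/2:ℝ) = 1+1/2 by norm_num, Real.rpow_add hp, Real.rpow_one,
      ← Real.sqrt_eq_rpow, one_div]
  rw [funext h]
  exact (summable_nat_add_iff 1).2 (Real.summable_nat_rpow.mpr (by norm_num))

lemma summable_cc_pow {u : ℝ} (h : |u| < 1) : Summable (fun m : ℕ => cc m * u^m) := by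
  apply Summable.of_norm_bounded (g := fun m => |u|^m) (summable_geometric_of_lt_one (abs_nonneg u) h)
  intro m
  rw [norm_mul, norm_pow, Real.norm_eq_abs, Real.norm_eq_abs,
    abs_of_pos (cc_pos m)]
  calc cc m * |u|^m ≤ 1 * |u|^m :=
    mul_le_mul_of_nonneg_right (cc_le_one m) (by positivity)
  _ = |u|^m := one_mul _

lemma summable_mul_geom {r : ℝ} (hr0 : 0 ≤ r) (hr : r < 1) :
    Summable (fun m : ℕ => (m:ℝ) * r^(m-1)) := by
  apply (summable_nat_add_iff 1).1
  have h : (fun m : ℕ => ((m+1:ℕ):ℝ) * r^((m+1)-1)) = fun m : ℕ => (m:ℝ)*r^m + r^m := by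
    funext m
    push_cast
    ring
  rw [h]
  exact ((summable_pow_mul_geometric_of_norm_lt_one 1 (by rwa [Real.norm_eq_abs, abs_of_nonneg hr0])).congr (by intro m; rw [pow_one])).add
    (summable_geometric_of_lt_one hr0 hr)

lemma summable_cc_deriv {u r : ℝ} (hu : |u| ≤ r) (hr : r < 1) :
    Summable (fun m : ℕ => cc m * ((m:ℝ) * u^(m-1))) := by
  apply Summable.of_norm_bounded (g := fun m : ℕ => (m:ℝ) * r^(m-1))
    (summable_mul_geom ((abs_nonneg u).trans hu) hr)
  intro m
  rw [Real.norm_eq_abs, abs_mul, abs_mul, abs_of_pos (cc_pos m), Nat.abs_cast]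
  calc cc m * ((m:ℝ) * |u^(m-1)|) ≤ 1 * ((m:ℝ) * r^(m-1)) := by
        apply mul_le_mul (cc_le_one m) _ (by positivity) zero_le_one
        apply mul_le_mul_of_nonneg_left _ (Nat.cast_nonneg m)
        rw [abs_pow]
        exact pow_le_pow_left₀ (abs_nonneg u) hu _
  _ = (m:ℝ) * r^(m-1) := one_mul _

lemma hasDerivAt_PP {r : ℝ} (hr0 : 0 < r) (hr : r < 1) {u : ℝ} (hu : u ∈ Set.Ioo (-r) r) :
    HasDerivAt (fun z : ℝ => ∑' m : ℕ, cc m * z^m)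
      (∑' m : ℕ, cc m * ((m:ℝ) * u^(m-1))) u := by
  refine hasDerivAt_tsum_of_isPreconnected (u := fun m : ℕ => (m:ℝ) * r^(m-1))
    (g := fun m z => cc m * z^m) (g' := fun m y => cc m * ((m:ℝ) * y^(m-1)))
    (y₀ := 0) (t := Set.Ioo (-r) r) (summable_mul_geom hr0.le hr) isOpen_Ioo
    (convex_Ioo _ _).isPreconnected
    ?_ ?_ ?_ ?_ ?_
  · intro m y _
    exact (hasDerivAt_pow m y).const_mul (cc m)
  · intro m y hy
    have hya : |y| ≤ r := by
      rw [abs_le]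
      exact ⟨hy.1.le, hy.2.le⟩
    rw [Real.norm_eq_abs, abs_mul, abs_mul, abs_of_pos (cc_pos m), Nat.abs_cast]
    calc cc m * ((m:ℝ) * |y^(m-1)|) ≤ 1 * ((m:ℝ) * r^(m-1)) := by
          apply mul_le_mul (cc_le_one m) _ (by positivity) zero_le_one
          apply mul_le_mul_of_nonneg_left _ (Nat.cast_nonneg m)
          rw [abs_pow]
          exact pow_le_pow_left₀ (abs_nonneg y) hya _
    _ = (m:ℝ) * r^(m-1) := one_mul _
  · exact Set.mem_Ioo.2 ⟨by linarith, hr0⟩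
  · apply Summable.of_norm_bounded (g := fun m => (1/2:ℝ)^m)
      (summable_geometric_of_lt_one (by norm_num) (by norm_num))
    intro m
    cases m with
    | zero => norm_num [cc_zero]
    | succ m =>
      simp only [zero_pow (Nat.succ_ne_zero m), mul_zero, norm_zero]
      positivity
  · exact hu

lemma PP_identity {u : ℝ} (h : |u| < 1) :
    (∑' m : ℕ, cc m * u^m) = 2*(1-u) * ∑' m : ℕ, cc m * ((m:ℝ) * u^(m-1)) := by
  set b : ℕ → ℝ := fun m => 2 * m * cc m * u^m with hb
  have hQs : Summable (fun m : ℕ => cc m * ((m:ℝ) * u^(m-1))) := summable_cc_deriv le_rfl h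
  have hPs : Summable (fun m : ℕ => cc m * u^m) := summable_cc_pow h
  -- b is summable, tends to 0
  have hbs : Summable b := by
    apply Summable.of_norm_bounded (g := fun m : ℕ => 2 * ((m:ℝ) * |u|^m))
      (((summable_pow_mul_geometric_of_norm_lt_one (R := ℝ) 1 (r := |u|)
        (by rwa [Real.norm_eq_abs, abs_abs])).congr
        (fun m => by rw [pow_one])).mul_left 2)
    intro m
    rw [hb, Real.norm_eq_abs]
    have hnn : (0:ℝ) ≤ 2*(m:ℝ)*cc m :=
      mul_nonneg (mul_nonneg (by norm_num) (Nat.cast_nonneg m)) (cc_pos m).le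
    have : |2 * (m:ℝ) * cc m * u^m| = 2 * (m:ℝ) * cc m * |u|^m := by
      rw [abs_mul, abs_pow, abs_of_nonneg hnn]
    rw [this]
    nlinarith [mul_le_mul_of_nonneg_right (cc_le_one m)
      (mul_nonneg (Nat.cast_nonneg (α := ℝ) m) (pow_nonneg (abs_nonneg u) m))]
  have hb0 : Filter.Tendsto b Filter.atTop (nhds 0) := hbs.tendsto_atTop_zero
  -- telescoping sum
  have htel : HasSum (fun m => b m - b (m+1)) 0 := by
    have hs : Summable (fun m => b m - b (m+1)) :=
      hbs.sub ((summable_nat_add_iff 1).2 hbs)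
    have h1 := hs.hasSum.tendsto_sum_nat
    have h2 : ∀ n : ℕ, ∑ i ∈ Finset.range n, (b i - b (i+1)) = b 0 - b n :=
      fun n => Finset.sum_range_sub' b n
    rw [funext h2] at h1
    have h3 : Filter.Tendsto (fun n => b 0 - b n) Filter.atTop (nhds 0) := by
      have : b 0 = 0 := by simp [hb]
      rw [this]
      simpa using hb0.neg
    have := tendsto_nhds_unique h1 h3
    rw [← this]
    exact hs.hasSum
  -- shifted HasSum for Q
  have hshift : Summable (fun m : ℕ => cc (m+1) * (((m:ℝ)+1) * u^m)) := by
    have h1 := (summable_nat_add_iff 1).2 hQs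
    apply h1.congr
    intro m
    push_cast
    rfl
  have hQshift : HasSum (fun m : ℕ => cc (m+1) * (((m:ℝ)+1) * u^m))
      (∑' m : ℕ, cc m * ((m:ℝ) * u^(m-1))) := by
    have h0 := Summable.tsum_eq_zero_add hQs
    simp only [Nat.cast_zero, zero_mul, mul_zero, zero_add] at h0
    have : (∑' m : ℕ, cc (m+1) * (((m+1:ℕ):ℝ) * u^((m+1)-1)))
        = ∑' m : ℕ, cc (m+1) * (((m:ℝ)+1) * u^m) := by
      apply tsum_congr
      intro m
      push_cast
      rfl
    rw [this] at h0
    rw [h0]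
    exact hshift.hasSum
  -- multiply by 2(1-u)
  have hLHS : HasSum (fun m : ℕ => 2*(1-u) * (cc (m+1) * (((m:ℝ)+1) * u^m)))
      (2*(1-u) * ∑' m : ℕ, cc m * ((m:ℝ) * u^(m-1))) := hQshift.mul_left _
  -- RHS HasSum
  have hRHS : HasSum (fun m : ℕ => cc m * u^m + (b m - b (m+1)))
      ((∑' m : ℕ, cc m * u^m) + 0) := hPs.hasSum.add htel
  -- termwise identity
  have hterm : ∀ m : ℕ, 2*(1-u) * (cc (m+1) * (((m:ℝ)+1) * u^m))
      = cc m * u^m + (b m - b (m+1)) := by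
    intro m
    have hrec : 2 * ((m:ℝ)+1) * cc (m+1) = (2*m+1) * cc m := by
      rw [cc_succ]
      have h2 : (2*(m:ℝ)+2) ≠ 0 := by positivity
      field_simp
    simp only [hb]
    push_cast
    linear_combination u^m * hrec
  rw [funext hterm] at hLHS
  have := hRHS.unique hLHS
  rw [add_zero] at this
  exact this

lemma hasSum_binom {w : ℝ} (h0 : 0 ≤ w) (h1 : w < 1) :
    HasSum (fun m : ℕ => cc m * w^m) (1 / Real.sqrt (1-w)) := by
  have hP0 : (∑' m : ℕ, cc m * (0:ℝ)^m) = 1 := by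
    rw [tsum_eq_single 0 (fun m hm => by
      cases m with
      | zero => exact absurd rfl hm
      | succ m => simp [zero_pow (Nat.succ_ne_zero m)])]
    simp [cc_zero]
  rcases eq_or_lt_of_le h0 with heq | hpos
  · rw [← heq]
    have : (1:ℝ) / Real.sqrt (1-0) = 1 := by simp
    rw [this, ← hP0]
    exact (summable_cc_pow (by simp)).hasSum
  · set r : ℝ := (1+w)/2 with hr_def
    have hr1 : r < 1 := by rw [hr_def]; linarith
    have hr0 : 0 < r := by rw [hr_def]; linarith
    have hwr : w < r := by rw [hr_def]; linarith
    set G : ℝ → ℝ := fun z => Real.sqrt (1-z) * ∑' m : ℕ, cc m * z^m with hG_def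
    have hGderiv : ∀ z ∈ Set.Icc (0:ℝ) w, HasDerivAt G 0 z := by
      intro z hz
      have hz1 : z < 1 := lt_of_le_of_lt hz.2 h1
      have hzr : z ∈ Set.Ioo (-r) r := ⟨by linarith [hz.1], lt_of_le_of_lt hz.2 hwr⟩
      have hzabs : |z| < 1 := abs_lt.2 ⟨by linarith [hz.1], hz1⟩
      have hsq_pos : (0:ℝ) < 1 - z := by linarith
      have hsqrt_pos : 0 < Real.sqrt (1-z) := Real.sqrt_pos.2 hsq_pos
      -- derivative of sqrt(1-z)
      have hs : HasDerivAt (fun y : ℝ => Real.sqrt (1-y)) (-(1/(2*Real.sqrt (1-z)))) z := by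
        have h2 : HasDerivAt (fun y : ℝ => 1-y) (-1) z := by
          simpa using (hasDerivAt_id z).const_sub 1
        have h3 : HasDerivAt Real.sqrt (1/(2*Real.sqrt (1-z))) (1-z) :=
          Real.hasDerivAt_sqrt (ne_of_gt hsq_pos)
        have := h3.comp z h2
        simpa [mul_comm, Function.comp_def] using this
      have hp := hasDerivAt_PP hr0 hr1 hzr
      have hmul := hs.mul hp
      have hzero : -(1/(2*Real.sqrt (1-z))) * (∑' m : ℕ, cc m * z^m)
          + Real.sqrt (1-z) * (∑' m : ℕ, cc m * ((m:ℝ) * z^(m-1))) = 0 := by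
        rw [PP_identity hzabs]
        have hss : Real.sqrt (1-z) * Real.sqrt (1-z) = 1 - z :=
          Real.mul_self_sqrt hsq_pos.le
        field_simp
        linear_combination (∑' m : ℕ, cc m * (m:ℝ) * z^(m-1)) * hss
      rw [hzero] at hmul
      exact hmul
    have hcont : ContinuousOn G (Set.Icc 0 w) :=
      fun z hz => ((hGderiv z hz).continuousAt).continuousWithinAt
    have hconst := constant_of_has_deriv_right_zero hcont
      (fun z hz => ((hGderiv z ⟨hz.1, hz.2.le⟩).hasDerivWithinAt))
    have hGw := hconst w ⟨h0, le_refl w⟩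
    have hG0 : G 0 = 1 := by
      rw [hG_def]
      simp only [sub_zero, Real.sqrt_one, one_mul]
      exact hP0
    rw [hG0] at hGw
    -- G w = 1 means sqrt(1-w) * P w = 1
    have hsqw : 0 < Real.sqrt (1-w) := Real.sqrt_pos.2 (by linarith)
    have hPw : (∑' m : ℕ, cc m * w^m) = 1 / Real.sqrt (1-w) := by
      rw [eq_div_iff (ne_of_gt hsqw), mul_comm]
      exact hGw
    rw [← hPw]
    exact (summable_cc_pow (abs_lt.2 ⟨by linarith, h1⟩)).hasSum

lemma cc_eq_prod (m : ℕ) : cc m = ∏ i ∈ Finset.range m, (2*(i:ℝ)+1)/(2*i+2) := by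
  induction m with
  | zero => simp [cc_zero]
  | succ m ih => rw [cc_succ, ih, Finset.prod_range_succ]

lemma integral_sin_pow_even_half (m : ℕ) :
    ∫ θ in (0:ℝ)..(π/2), Real.sin θ^(2*m) = π/2 * cc m := by
  have hint : ∀ a b : ℝ, IntervalIntegrable (fun θ => Real.sin θ^(2*m)) MeasureTheory.volume a b :=
    fun a b => ((Real.continuous_sin.pow (2*m)).intervalIntegrable a b)
  have hfull : ∫ θ in (0:ℝ)..π, Real.sin θ^(2*m)
      = π * ∏ i ∈ Finset.range m, (2*(i:ℝ)+1)/(2*i+2) := integral_sin_pow_even (n := m)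
  have hsym : ∫ θ in (0:ℝ)..(π/2), Real.sin θ^(2*m)
      = ∫ θ in (π/2)..π, Real.sin θ^(2*m) := by
    have h1 := intervalIntegral.integral_comp_sub_left (a := (0:ℝ)) (b := π/2)
      (fun θ => Real.sin θ^(2*m)) π
    have h2 : ∀ θ : ℝ, Real.sin (π - θ)^(2*m) = Real.sin θ^(2*m) := by
      intro θ; rw [Real.sin_pi_sub]
    simp only [h2] at h1
    rw [h1, show π - π/2 = π/2 by ring, show π - (0:ℝ) = π by ring]
  have hsplit : (∫ θ in (0:ℝ)..(π/2), Real.sin θ^(2*m))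
      + ∫ θ in (π/2)..π, Real.sin θ^(2*m) = ∫ θ in (0:ℝ)..π, Real.sin θ^(2*m) :=
    intervalIntegral.integral_add_adjacent_intervals (hint 0 (π/2)) (hint (π/2) π)
  rw [← hsym] at hsplit
  rw [cc_eq_prod]
  rw [hfull] at hsplit
  linarith

lemma ellipticK_series {k : ℝ} (h0 : 0 ≤ k) (h1 : k < 1) :
    ellipticK k = π/2 * ∑' m : ℕ, cc m^2 * (k^2)^m := by
  have hk2 : k^2 < 1 := by nlinarith
  -- pointwise series expansion of the integrand
  have hpt : ∀ θ : ℝ, 1 / Real.sqrt (1 - (k * Real.sin θ)^2)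
      = ∑' m : ℕ, cc m * ((k * Real.sin θ)^2)^m := by
    intro θ
    have hw0 : (0:ℝ) ≤ (k * Real.sin θ)^2 := sq_nonneg _
    have hw1 : (k * Real.sin θ)^2 < 1 := by
      have e : (k * Real.sin θ)^2 = k^2 * Real.sin θ^2 := mul_pow k _ 2
      have hs2 : Real.sin θ^2 ≤ 1 := Real.sin_sq_le_one θ
      nlinarith [sq_nonneg k, sq_nonneg (Real.sin θ)]
    exact (hasSum_binom hw0 hw1).tsum_eq.symm
  have hpos : (0:ℝ) ≤ π/2 := by positivity
  -- value of each term's integral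
  have hterm_int : ∀ m : ℕ, (∫ θ in (0:ℝ)..(π/2), cc m * ((k * Real.sin θ)^2)^m)
      = π/2 * (cc m^2 * (k^2)^m) := by
    intro m
    have he : ∀ θ : ℝ, cc m * ((k * Real.sin θ)^2)^m = (cc m * (k^2)^m) * Real.sin θ^(2*m) := by
      intro θ
      rw [mul_pow, mul_pow, ← pow_mul, ← pow_mul]
      ring
    rw [intervalIntegral.integral_congr (fun θ _ => he θ),
      intervalIntegral.integral_const_mul, integral_sin_pow_even_half]
    ring
  have hInt : ∀ m : ℕ, MeasureTheory.IntegrableOn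
      (fun θ => cc m * ((k * Real.sin θ)^2)^m) (Set.Ioc 0 (π/2)) MeasureTheory.volume := by
    intro m
    rw [← intervalIntegrable_iff_integrableOn_Ioc_of_le hpos]
    exact (Continuous.intervalIntegrable (by continuity) 0 (π/2))
  have hnonneg : ∀ m : ℕ, ∀ θ : ℝ, 0 ≤ cc m * ((k * Real.sin θ)^2)^m := by
    intro m θ
    exact mul_nonneg (cc_pos m).le (pow_nonneg (sq_nonneg _) m)
  have hsum_norm : Summable (fun m : ℕ =>
      ∫ θ in Set.Ioc (0:ℝ) (π/2), ‖cc m * ((k * Real.sin θ)^2)^m‖) := by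
    have heq : ∀ m : ℕ, (∫ θ in Set.Ioc (0:ℝ) (π/2), ‖cc m * ((k * Real.sin θ)^2)^m‖)
        = π/2 * (cc m^2 * (k^2)^m) := by
      intro m
      have : ∀ θ : ℝ, ‖cc m * ((k * Real.sin θ)^2)^m‖ = cc m * ((k * Real.sin θ)^2)^m :=
        fun θ => Real.norm_of_nonneg (hnonneg m θ)
      simp only [this]
      rw [← intervalIntegral.integral_of_le hpos]
      exact hterm_int m
    rw [funext heq]
    apply Summable.mul_left
    apply Summable.of_norm_bounded (g := fun m : ℕ => (k^2)^m)
      (summable_geometric_of_lt_one (sq_nonneg k) hk2)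
    intro m
    have h2 := cc_pos m
    have h3 := cc_le_one m
    rw [Real.norm_eq_abs, abs_of_nonneg (mul_nonneg (sq_nonneg _) (pow_nonneg (sq_nonneg k) m))]
    nlinarith [mul_le_mul_of_nonneg_right (show cc m^2 ≤ 1 by nlinarith)
      (pow_nonneg (sq_nonneg k) m)]
  -- swap sum and integral
  have hswap := MeasureTheory.integral_tsum_of_summable_integral_norm
    (F := fun (m : ℕ) (θ : ℝ) => cc m * ((k * Real.sin θ)^2)^m)
    (μ := MeasureTheory.volume.restrict (Set.Ioc (0:ℝ) (π/2)))
    (fun m => hInt m) hsum_norm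
  rw [ellipticK]
  rw [intervalIntegral.integral_congr (fun θ _ => hpt θ)]
  rw [intervalIntegral.integral_of_le hpos, ← hswap]
  have : ∀ m : ℕ, (∫ θ in Set.Ioc (0:ℝ) (π/2), cc m * ((k * Real.sin θ)^2)^m)
      = π/2 * (cc m^2 * (k^2)^m) := by
    intro m
    rw [← intervalIntegral.integral_of_le hpos]
    exact hterm_int m
  rw [funext this, tsum_mul_left]

noncomputable def gg (n : ℕ) (t : ℝ) : ℝ :=
  cc (n+1)^2 * 4^n / ((n:ℝ)+1) * (t^2-t^4)^(n+1)

noncomputable def gg' (n : ℕ) (t : ℝ) : ℝ :=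
  cc (n+1)^2 * 4^n / ((n:ℝ)+1) * (((n:ℝ)+1) * (t^2-t^4)^n * (2*t-4*t^3))

lemma hasDerivAt_gg (n : ℕ) (t : ℝ) : HasDerivAt (gg n) (gg' n t) t := by
  have hinner : HasDerivAt (fun t : ℝ => t^2-t^4) (2*t-4*t^3) t := by
    have h := (hasDerivAt_pow 2 t).sub (hasDerivAt_pow 4 t)
    have e : ((2:ℕ):ℝ) * t ^ (2 - 1) - ((4:ℕ):ℝ) * t ^ (4 - 1) = 2*t-4*t^3 := by
      norm_num
    rw [e] at h
    exact h
  have hpow : HasDerivAt (fun t : ℝ => (t^2-t^4)^(n+1))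
      (((n:ℝ)+1) * (t^2-t^4)^n * (2*t-4*t^3)) t := by
    have h := (hasDerivAt_pow (n+1) (t^2-t^4)).comp t hinner
    refine h.congr_deriv ?_
    push_cast
    ring
  exact hpow.const_mul _

lemma gg'_bound {t : ℝ} (h0 : 0 < t) (h1 : t < 1) (n : ℕ) :
    ‖gg' n t‖ ≤ 1/(((n:ℝ)+1) * Real.sqrt ((n:ℝ)+1)) := by
  have hn1 : ((n:ℝ)+1) ≠ 0 := by positivity
  have hyv : t^2 - t^4 = t^2*(1-t^2) := by ring
  have ht2 : t^2 ≤ 1 := by nlinarith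
  have hy0 : 0 ≤ t^2-t^4 := by nlinarith [sq_nonneg t]
  set w : ℝ := (1-2*t^2)^2 with hw_def
  have hw0 : 0 ≤ w := sq_nonneg _
  have hw1 : w ≤ 1 := by nlinarith
  have h4y : 4*(t^2-t^4) = 1-w := by rw [hw_def]; ring
  have habs : |2*t-4*t^3| ≤ 2 * Real.sqrt w := by
    have : |2*t-4*t^3| = 2*t*|1-2*t^2| := by
      rw [show 2*t-4*t^3 = 2*t*(1-2*t^2) by ring, abs_mul,
        abs_of_pos (by linarith : (0:ℝ) < 2*t)]
    rw [this, hw_def, Real.sqrt_sq_eq_abs]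
    nlinarith [abs_nonneg (1-2*t^2)]
  have hval : gg' n t = cc (n+1)^2 * (4*(t^2-t^4))^n * (2*t-4*t^3) := by
    rw [gg', mul_pow]
    field_simp
  rw [hval, Real.norm_eq_abs, abs_mul, abs_mul]
  have hcc2 : |cc (n+1)^2| = cc (n+1)^2 := abs_of_pos (pow_pos (cc_pos _) 2)
  have hpow : |(4*(t^2-t^4))^n| = (1-w)^n := by
    rw [abs_pow, h4y, abs_of_nonneg (by linarith)]
  rw [hcc2, hpow]
  have hsq := cc_sq_le (n+1)
  have hsqw := sqrt_mul_pow_le hw0 hw1 n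
  have hb1 : cc (n+1)^2 * (1-w)^n * |2*t-4*t^3|
      ≤ (1/(2*((n:ℝ)+1)+1)) * (1-w)^n * (2*Real.sqrt w) := by
    apply mul_le_mul _ habs (abs_nonneg _)
      (mul_nonneg (by positivity) (pow_nonneg (by linarith) n))
    apply mul_le_mul_of_nonneg_right _ (pow_nonneg (by linarith) n)
    calc cc (n+1)^2 ≤ 1/(2*((n+1:ℕ):ℝ)+1) := hsq
    _ = 1/(2*((n:ℝ)+1)+1) := by push_cast; ring
  refine le_trans hb1 ?_
  have hb2 : (1-w)^n * (2*Real.sqrt w) = 2 * (Real.sqrt w * (1-w)^n) := by ring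
  have hb3 : (1/(2*((n:ℝ)+1)+1)) * ((1-w)^n * (2*Real.sqrt w))
      ≤ (1/(2*((n:ℝ)+1)+1)) * (2 * (1/Real.sqrt ((n:ℝ)+1))) := by
    apply mul_le_mul_of_nonneg_left _ (by positivity)
    rw [hb2]
    have : Real.sqrt w * (1-w)^n ≤ 1/Real.sqrt ((n:ℝ)+1) := hsqw
    linarith
  calc (1/(2*((n:ℝ)+1)+1)) * (1-w)^n * (2*Real.sqrt w)
      = (1/(2*((n:ℝ)+1)+1)) * ((1-w)^n * (2*Real.sqrt w)) := by ring
  _ ≤ (1/(2*((n:ℝ)+1)+1)) * (2 * (1/Real.sqrt ((n:ℝ)+1))) := hb3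
  _ = 2/((2*((n:ℝ)+1)+1) * Real.sqrt ((n:ℝ)+1)) := by
      have hs0 : Real.sqrt ((n:ℝ)+1) ≠ 0 := ne_of_gt (Real.sqrt_pos.2 (by positivity))
      field_simp
  _ ≤ 1/(((n:ℝ)+1) * Real.sqrt ((n:ℝ)+1)) := by
      have hs0 : 0 < Real.sqrt ((n:ℝ)+1) := Real.sqrt_pos.2 (by positivity)
      rw [div_le_div_iff₀ (by positivity) (by positivity)]
      nlinarith [hs0, mul_nonneg (Nat.cast_nonneg (α := ℝ) n) hs0.le]

lemma summable_gg_half : Summable (fun n : ℕ => gg n (1/2)) := by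
  apply Summable.of_norm_bounded (g := fun n : ℕ => (3/4:ℝ)^n)
    (summable_geometric_of_lt_one (by norm_num) (by norm_num))
  intro n
  have h1 : gg n (1/2) = cc (n+1)^2 * 4^n / ((n:ℝ)+1) * (3/16)^(n+1) := by
    rw [gg]
    norm_num
  rw [h1, Real.norm_eq_abs]
  have hcc := cc_pos (n+1)
  have hcc1 := cc_le_one (n+1)
  have hn : (1:ℝ) ≤ (n:ℝ)+1 := by
    have := Nat.cast_nonneg (α := ℝ) n
    linarith
  have hpos : (0:ℝ) < cc (n+1)^2 * 4^n / ((n:ℝ)+1) * (3/16)^(n+1) := by positivity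
  rw [abs_of_pos hpos]
  have e : (4:ℝ)^n * (3/16)^(n+1) = (3/16) * (3/4)^n := by
    rw [pow_succ]
    rw [show ((3:ℝ)/4)^n = (4^n * (3/16)^n : ℝ) by rw [← mul_pow]; norm_num]
    ring
  have hb : cc (n+1)^2 * 4^n / ((n:ℝ)+1) * (3/16)^(n+1)
      ≤ 1 * (4^n * (3/16)^(n+1)) := by
    rw [mul_div_assoc, mul_assoc]
    apply mul_le_mul _ _ (by positivity) (by norm_num)
    · nlinarith
    · rw [div_mul_eq_mul_div, mul_comm]
      apply div_le_of_le_mul₀ (by positivity) (by positivity)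
      nlinarith [pow_pos (show (0:ℝ) < 4 by norm_num) n,
        pow_pos (show (0:ℝ) < 3/16 by norm_num) (n+1),
        mul_pos (pow_pos (show (0:ℝ) < 4 by norm_num) n) (pow_pos (show (0:ℝ) < 3/16 by norm_num) (n+1))]
  rw [one_mul, e] at hb
  nlinarith [pow_pos (show (0:ℝ) < 3/4 by norm_num) n]

lemma hasDerivAt_ggsum {v : ℝ} (hv0 : 0 < v) (hv1 : v < 1) :
    HasDerivAt (fun t : ℝ => ∑' n : ℕ, gg n t) (∑' n : ℕ, gg' n v) v := by
  refine hasDerivAt_tsum_of_isPreconnected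
    (u := fun n : ℕ => 1/(((n:ℝ)+1) * Real.sqrt ((n:ℝ)+1)))
    (g := gg) (g' := fun n t => gg' n t) (y₀ := 1/2) (t := Set.Ioo (0:ℝ) 1)
    summable_bound isOpen_Ioo (convex_Ioo _ _).isPreconnected
    (fun n y _ => hasDerivAt_gg n y) (fun n y hy => gg'_bound hy.1 hy.2 n)
    (by norm_num) summable_gg_half ⟨hv0, hv1⟩

lemma F43_rewrite (t : ℝ) :
    (t^2*(1-t^2)/4) * F43 1 1 (3/2) (3/2) 2 2 2 (4*t^2*(1-t^2)) = ∑' n : ℕ, gg n t := by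
  rw [F43, ← tsum_mul_left]
  apply tsum_congr
  intro n
  rw [poch_one, poch_two, poch_three_half, gg]
  have e1 : (4*t^2*(1-t^2))^n = 4^n * (t^2-t^4)^n := by
    rw [show 4*t^2*(1-t^2) = 4*(t^2-t^4) by ring, mul_pow]
  rw [e1]
  have hcc : cc (n+1) = poch (1/2) (n+1) / ((n+1).factorial : ℝ) := rfl
  have hfac : ((n+1).factorial : ℝ) = ((n:ℝ)+1) * (n.factorial : ℝ) := by
    push_cast [Nat.factorial_succ]
    ring
  have hfn : (n.factorial : ℝ) ≠ 0 := Nat.cast_ne_zero.2 n.factorial_ne_zero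
  have hfn1 : ((n+1).factorial : ℝ) ≠ 0 := Nat.cast_ne_zero.2 (n+1).factorial_ne_zero
  have hn1 : ((n:ℝ)+1) ≠ 0 := by positivity
  rw [hcc, hfac]
  field_simp
  ring

lemma hasDerivAt_logpart {v : ℝ} (hv0 : 0 < v) (hv1 : v < 1) :
    HasDerivAt (fun t : ℝ => Real.log (2 / Real.sqrt (1 - t^2))) (v/(1-v^2)) v := by
  have hv2 : 0 < 1 - v^2 := by nlinarith
  have hinner : HasDerivAt (fun t : ℝ => 1 - t^2) (-(2*v)) v := by
    have h := (hasDerivAt_pow 2 v).const_sub 1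
    have e : -(((2:ℕ):ℝ) * v^(2-1)) = -(2*v) := by norm_num
    rw [e] at h
    exact h
  have hlog : HasDerivAt (fun t : ℝ => Real.log (1 - t^2)) ((1-v^2)⁻¹ * (-(2*v))) v :=
    by simpa [Function.comp_def] using (Real.hasDerivAt_log hv2.ne').comp v hinner
  have hf2 : HasDerivAt (fun t : ℝ => Real.log 2 - Real.log (1 - t^2)/2)
      (v/(1-v^2)) v := by
    have h := (hlog.div_const 2).const_sub (Real.log 2)
    have e : -((1-v^2)⁻¹ * (-(2*v))/2) = v/(1-v^2) := by
      field_simp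
    rw [e] at h
    exact h
  apply hf2.congr_of_eventuallyEq
  have hopen : Set.Ioo (-1:ℝ) 1 ∈ nhds v := isOpen_Ioo.mem_nhds ⟨by linarith, hv1⟩
  filter_upwards [hopen] with t ht
  have ht2 : 0 < 1 - t^2 := by nlinarith [ht.1, ht.2]
  have hs : 0 < Real.sqrt (1 - t^2) := Real.sqrt_pos.2 ht2
  rw [Real.log_div (by norm_num) (ne_of_gt hs), Real.log_sqrt ht2.le]

theorem stmt_13 (v : ℝ) (hv0 : 0 < v) (hv1 : v < 1) :
    HasDerivAt
      (fun t : ℝ => Real.log (2 / Real.sqrt (1 - t ^ 2)) -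
        (t ^ 2 * (1 - t ^ 2) / 4) *
          F43 1 1 (3/2) (3/2) 2 2 2 (4 * t ^ 2 * (1 - t ^ 2)))
      ((π - (2 - 4 * v ^ 2) * ellipticK (2 * v * Real.sqrt (1 - v ^ 2))) /
        (2 * π * v * (1 - v ^ 2))) v := by
  have hv2 : 0 < 1 - v^2 := by nlinarith
  have hπ := Real.pi_ne_zero
  have hfun : (fun t : ℝ => Real.log (2 / Real.sqrt (1 - t ^ 2)) -
        (t ^ 2 * (1 - t ^ 2) / 4) *
          F43 1 1 (3/2) (3/2) 2 2 2 (4 * t ^ 2 * (1 - t ^ 2)))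
      = fun t : ℝ => Real.log (2 / Real.sqrt (1 - t ^ 2)) - ∑' n : ℕ, gg n t := by
    funext t
    rw [F43_rewrite]
  rw [hfun]
  have hd := (hasDerivAt_logpart hv0 hv1).sub (hasDerivAt_ggsum hv0 hv1)
  refine hd.congr_deriv (Eq.symm ?_)
  by_cases hcase : 1 - 2*v^2 = 0
  · -- v = 1/√2 : every derivative term vanishes
    have hzero : ∀ n : ℕ, gg' n v = 0 := by
      intro n
      have h2v : 2*v - 4*v^3 = 0 := by linear_combination 2*v*hcase
      rw [gg', h2v]
      ring
    rw [funext hzero, tsum_zero, sub_zero]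
    have h24 : 2 - 4*v^2 = 0 := by linarith
    rw [show (2:ℝ) - 4*v^2 = 2 - 4*v^2 by ring, h24, zero_mul, sub_zero]
    rw [div_eq_div_iff (by positivity) (ne_of_gt hv2)]
    linear_combination π * (1-v^2) * hcase
  · -- generic case
    set k : ℝ := 2*v*Real.sqrt (1-v^2) with hk_def
    have hk0 : 0 ≤ k := by positivity
    have hks : k^2 = 4*(v^2-v^4) := by
      rw [hk_def, mul_pow, mul_pow, Real.sq_sqrt hv2.le]
      ring
    have hsqpos : 0 < (1-2*v^2)^2 := by
      rcases lt_or_gt_of_ne hcase with h | h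
      · nlinarith
      · nlinarith
    have hk21 : k^2 < 1 := by rw [hks]; nlinarith
    have hk1 : k < 1 := by nlinarith
    have hy0 : 0 ≤ v^2-v^4 := by nlinarith
    have h4y1 : 4*(v^2-v^4) < 1 := by rw [← hks]; exact hk21
    have h4y0 : 0 ≤ 4*(v^2-v^4) := by linarith
    -- summability of the shifted series
    have hsum : Summable (fun m : ℕ => cc m^2 * (4*(v^2-v^4))^m) := by
      apply Summable.of_norm_bounded (g := fun m : ℕ => (4*(v^2-v^4))^m)
        (summable_geometric_of_lt_one h4y0 h4y1)
      intro m
      rw [Real.norm_eq_abs, abs_of_nonneg (mul_nonneg (sq_nonneg _) (pow_nonneg h4y0 m))]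
      nlinarith [mul_le_mul_of_nonneg_right
        (show cc m^2 ≤ 1 by nlinarith [cc_pos m, cc_le_one m]) (pow_nonneg h4y0 m)]
    have hshift : (∑' m : ℕ, cc m^2 * (4*(v^2-v^4))^m)
        = 1 + (4*(v^2-v^4)) * ∑' n : ℕ, cc (n+1)^2 * (4*(v^2-v^4))^n := by
      rw [Summable.tsum_eq_zero_add hsum]
      rw [cc_zero]
      norm_num
      rw [show (fun n : ℕ => cc (n+1)^2 * (4*(v^2-v^4))^(n+1))
        = fun n : ℕ => (4*(v^2-v^4)) * (cc (n+1)^2 * (4*(v^2-v^4))^n) from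
        funext (fun n => by rw [pow_succ]; ring), tsum_mul_left]
    have hser := ellipticK_series hk0 hk1
    rw [hks] at hser
    rw [hshift] at hser
    -- rewrite the derivative sum
    have hgg' : (fun n : ℕ => gg' n v)
        = fun n : ℕ => (2*v-4*v^3) * (cc (n+1)^2 * (4*(v^2-v^4))^n) := by
      funext n
      have hn1 : ((n:ℝ)+1) ≠ 0 := by positivity
      rw [gg', mul_pow]
      field_simp
    rw [hgg', tsum_mul_left]
    rw [hser]
    set T : ℝ := ∑' n : ℕ, cc (n+1)^2 * (4*(v^2-v^4))^n with hT_def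
    have hne : (1:ℝ) - v^2 ≠ 0 := ne_of_gt hv2
    have hvne : v ≠ 0 := ne_of_gt hv0
    field_simp
    ring
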